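/- If φ is an orthonormal N-frame and η ∈ T_φ, then the curve c : ℝ → (Fin N → H₀) defined by c(t) := (φ+tη)·(I_N + t²⟦η,η⟧)^{-1/2} satisfies c(0) = φ and has derivative c'(0) = η at t = 0 (derivative taken in the product inner product space (Fin N → H₀, (·,·)_H)). -/

import Mathlib

open scoped RealInnerProductSpace

/-- The outer product `⟦v,w⟧ ∈ ℝ^{N×N}` of two tuples, with entries `⟨v i, w j⟩`. -/
noncomputable def outerProd {N : ℕ} {H₀ : Type*} [NormedAddCommGroup H₀]
    [InnerProductSpace ℝ H₀] (v w : Fin N → H₀) : Matrix (Fin N) (Fin N) ℝ :=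
  Matrix.of fun i j => ⟪v i, w j⟫

/-- Multiplication of a tuple by a matrix from the right: `(vS)_j = Σ_i S_{ij} v_i`. -/
def smulMat {N : ℕ} {H₀ : Type*} [AddCommGroup H₀] [Module ℝ H₀]
    (v : Fin N → H₀) (S : Matrix (Fin N) (Fin N) ℝ) : Fin N → H₀ :=
  fun j => ∑ i, S i j • v i

/-- The inner product `(v,w)_H = Σ_j ⟨v_j, w_j⟩ = tr⟦v,w⟧`. -/
noncomputable def innerH {N : ℕ} {H₀ : Type*} [NormedAddCommGroup H₀]
    [InnerProductSpace ℝ H₀] (v w : Fin N → H₀) : ℝ :=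
  ∑ j, ⟪v j, w j⟫

section Aux

open Matrix Asymptotics

lemma herm_dot {N : ℕ} {S : Matrix (Fin N) (Fin N) ℝ} (hS : S.IsHermitian)
    (u v : Fin N → ℝ) : (S *ᵥ u) ⬝ᵥ v = u ⬝ᵥ (S *ᵥ v) := by
  have hT : Sᵀ = S := by
    have := hS
    rw [Matrix.IsHermitian, conjTranspose] at this
    exact (conjTranspose_eq_transpose_of_trivial S).symm.trans hS
  calc (S *ᵥ u) ⬝ᵥ v = v ⬝ᵥ (S *ᵥ u) := dotProduct_comm _ _
    _ = (v ᵥ* S) ⬝ᵥ u := dotProduct_mulVec _ _ _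
    _ = (Sᵀ *ᵥ v) ⬝ᵥ u := by rw [mulVec_transpose]
    _ = (S *ᵥ v) ⬝ᵥ u := by rw [hT]
    _ = u ⬝ᵥ (S *ᵥ v) := dotProduct_comm _ _

lemma key_entry_bound {N : ℕ} (A S : Matrix (Fin N) (Fin N) ℝ) (t : ℝ)
    (hA : A.PosSemidef) (hS : S.PosSemidef) (hsq : S * S = 1 + t ^ 2 • A) :
    ∀ i j, |(S⁻¹ - 1) i j| ≤
      t ^ 2 * Real.sqrt ((A *ᵥ Pi.single j 1) ⬝ᵥ (A *ᵥ Pi.single j 1)) := by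
  have dnn : ∀ v : Fin N → ℝ, 0 ≤ v ⬝ᵥ v := fun v =>
    Fintype.sum_nonneg fun i => mul_self_nonneg (v i)
  have hA2 : ∀ x : Fin N → ℝ, 0 ≤ x ⬝ᵥ (A *ᵥ x) := fun x => by
    simpa using hA.dotProduct_mulVec_nonneg x
  have hS2 : ∀ x : Fin N → ℝ, 0 ≤ x ⬝ᵥ (S *ᵥ x) := fun x => by
    simpa using hS.dotProduct_mulVec_nonneg x
  have hq : ∀ y : Fin N → ℝ, y ⬝ᵥ ((S * S) *ᵥ y) = y ⬝ᵥ y + t ^ 2 * (y ⬝ᵥ (A *ᵥ y)) := by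
    intro y
    rw [hsq, add_mulVec, one_mulVec, dotProduct_add, smul_mulVec, dotProduct_smul,
      smul_eq_mul]
  have hP : (1 + t ^ 2 • A : Matrix (Fin N) (Fin N) ℝ).PosDef := by
    refine Matrix.PosDef.of_dotProduct_mulVec_pos ?_ fun x hx => ?_
    · have h := hA.1
      rw [Matrix.IsHermitian] at h ⊢
      rw [conjTranspose_add, conjTranspose_smul, conjTranspose_one, h, star_trivial]
    · have h1 : (0:ℝ) < x ⬝ᵥ x := by
        rcases lt_or_eq_of_le (dnn x) with h | h
        · exact h
        · exact absurd (dotProduct_self_eq_zero.mp h.symm) hx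
      have h2 : 0 ≤ t ^ 2 * (x ⬝ᵥ (A *ᵥ x)) := mul_nonneg (sq_nonneg t) (hA2 x)
      have h3 : x ⬝ᵥ ((1 + t ^ 2 • A) *ᵥ x) = x ⬝ᵥ x + t ^ 2 * (x ⬝ᵥ (A *ᵥ x)) := by
        rw [add_mulVec, one_mulVec, dotProduct_add, smul_mulVec, dotProduct_smul,
          smul_eq_mul]
      simp only [star_trivial]
      rw [h3]; linarith
  have hdetS : IsUnit S.det := by
    have h : S.det * S.det = (1 + t ^ 2 • A : Matrix (Fin N) (Fin N) ℝ).det := by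
      rw [← det_mul, hsq]
    have := hP.det_pos
    refine isUnit_iff_ne_zero.2 fun h0 => ?_
    rw [h0, mul_zero] at h
    linarith
  have hS1 : S * S⁻¹ = 1 := mul_nonsing_inv S hdetS
  have hS1' : S⁻¹ * S = 1 := nonsing_inv_mul S hdetS
  have hT : (1 + S : Matrix (Fin N) (Fin N) ℝ).PosDef := by
    refine Matrix.PosDef.of_dotProduct_mulVec_pos ?_ fun x hx => ?_
    · have h := hS.1
      rw [Matrix.IsHermitian] at h ⊢
      rw [conjTranspose_add, conjTranspose_one, h]
    · have h1 : (0:ℝ) < x ⬝ᵥ x := by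
        rcases lt_or_eq_of_le (dnn x) with h | h
        · exact h
        · exact absurd (dotProduct_self_eq_zero.mp h.symm) hx
      have h3 : x ⬝ᵥ ((1 + S) *ᵥ x) = x ⬝ᵥ x + x ⬝ᵥ (S *ᵥ x) := by
        rw [add_mulVec, one_mulVec, dotProduct_add]
      simp only [star_trivial]
      rw [h3]
      have := hS2 x
      linarith
  have hdetT : IsUnit (1 + S : Matrix (Fin N) (Fin N) ℝ).det :=
    isUnit_iff_ne_zero.2 (ne_of_gt hT.det_pos)
  have hT1 : (1 + S) * (1 + S)⁻¹ = 1 := mul_nonsing_inv _ hdetT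
  have hT1' : (1 + S)⁻¹ * (1 + S) = 1 := nonsing_inv_mul _ hdetT
  have hbS : ∀ x : Fin N → ℝ, (S⁻¹ *ᵥ x) ⬝ᵥ (S⁻¹ *ᵥ x) ≤ x ⬝ᵥ x := by
    intro x
    set y := S⁻¹ *ᵥ x with hy
    have hxy : S *ᵥ y = x := by
      rw [hy, mulVec_mulVec, hS1, one_mulVec]
    have h1 : x ⬝ᵥ x = y ⬝ᵥ ((S * S) *ᵥ y) := by
      conv_lhs => rw [← hxy]
      rw [← mulVec_mulVec, herm_dot hS.1]
    rw [h1, hq]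
    have := mul_nonneg (sq_nonneg t) (hA2 y)
    linarith
  have hbT : ∀ x : Fin N → ℝ, ((1 + S)⁻¹ *ᵥ x) ⬝ᵥ ((1 + S)⁻¹ *ᵥ x) ≤ x ⬝ᵥ x := by
    intro x
    set y := (1 + S)⁻¹ *ᵥ x with hy
    have hxy : (1 + S) *ᵥ y = x := by
      rw [hy, mulVec_mulVec, hT1, one_mulVec]
    have h1 : x ⬝ᵥ x = y ⬝ᵥ (((1 + S) * (1 + S)) *ᵥ y) := by
      conv_lhs => rw [← hxy]
      rw [← mulVec_mulVec, herm_dot (hT.1)]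
    have h2 : ((1 + S) * (1 + S) : Matrix (Fin N) (Fin N) ℝ) = 1 + S + S + S * S := by
      noncomm_ring
    have h3 : 0 ≤ y ⬝ᵥ ((S * S) *ᵥ y) := by
      rw [← mulVec_mulVec, ← herm_dot hS.1]
      exact dnn _
    have h4 := hS2 y
    rw [h1, h2]
    simp only [add_mulVec, one_mulVec, dotProduct_add]
    linarith
  have hid : S⁻¹ - 1 = (-(t ^ 2)) • (S⁻¹ * ((1 + S)⁻¹ * A)) := by
    have h1 : (1 + S) * (1 - S) = (-(t ^ 2)) • A := by
      have hx : (1 + S) * (1 - S) = 1 - S * S := by noncomm_ring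
      rw [hx, hsq, sub_add_cancel_left, ← neg_smul]
    have h2 : (1 - S : Matrix (Fin N) (Fin N) ℝ) = (1 + S)⁻¹ * ((-(t ^ 2)) • A) := by
      rw [← h1, ← Matrix.mul_assoc, hT1', Matrix.one_mul]
    have h3 : S⁻¹ - 1 = S⁻¹ * (1 - S) := by
      rw [Matrix.mul_sub, Matrix.mul_one, hS1']
    rw [h3, h2, Matrix.mul_smul, Matrix.mul_smul]
  intro i j
  set w : Fin N → ℝ := A *ᵥ Pi.single j 1 with hw
  set u : Fin N → ℝ := S⁻¹ *ᵥ Pi.single i 1 with hu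
  set z : Fin N → ℝ := (1 + S)⁻¹ *ᵥ w with hz
  have hee : ∀ B : Matrix (Fin N) (Fin N) ℝ,
      (Pi.single i 1 : Fin N → ℝ) ⬝ᵥ (B *ᵥ Pi.single j 1) = B i j := by
    intro B
    rw [Matrix.mulVec_single_one, single_dotProduct, one_mul, Matrix.col_apply]
  have hentry : (S⁻¹ - 1) i j = (-(t ^ 2)) * (u ⬝ᵥ z) := by
    rw [hid, Matrix.smul_apply, smul_eq_mul]
    congr 1
    calc (S⁻¹ * ((1 + S)⁻¹ * A)) i j
        = (Pi.single i 1 : Fin N → ℝ) ⬝ᵥ ((S⁻¹ * ((1 + S)⁻¹ * A)) *ᵥ Pi.single j 1) :=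
          (hee _).symm
      _ = (Pi.single i 1 : Fin N → ℝ) ⬝ᵥ (S⁻¹ *ᵥ ((1 + S)⁻¹ *ᵥ (A *ᵥ Pi.single j 1))) := by
          rw [← mulVec_mulVec, ← mulVec_mulVec]
      _ = u ⬝ᵥ z := by rw [← herm_dot hS.1.inv]
  have hcs : (u ⬝ᵥ z) ^ 2 ≤ (u ⬝ᵥ u) * (z ⬝ᵥ z) := by
    have := Finset.sum_mul_sq_le_sq_mul_sq Finset.univ u z
    simpa [dotProduct, sq, Finset.mul_sum] using this
  have hu1 : u ⬝ᵥ u ≤ 1 := by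
    have h := hbS (Pi.single i 1)
    have he : (Pi.single i 1 : Fin N → ℝ) ⬝ᵥ Pi.single i 1 = 1 := by
      rw [single_dotProduct, one_mul, Pi.single_eq_same]
    rw [he] at h
    exact h
  have hz1 : z ⬝ᵥ z ≤ w ⬝ᵥ w := hbT w
  have hzz : 0 ≤ z ⬝ᵥ z := dnn z
  have hsqle : (u ⬝ᵥ z) ^ 2 ≤ w ⬝ᵥ w := by
    calc (u ⬝ᵥ z) ^ 2 ≤ (u ⬝ᵥ u) * (z ⬝ᵥ z) := hcs
      _ ≤ 1 * (w ⬝ᵥ w) := mul_le_mul hu1 hz1 hzz (by norm_num)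
      _ = w ⬝ᵥ w := one_mul _
  have habs : |u ⬝ᵥ z| ≤ Real.sqrt (w ⬝ᵥ w) := by
    rw [← Real.sqrt_sq_eq_abs]
    exact Real.sqrt_le_sqrt hsqle
  rw [hentry, abs_mul]
  have h5 : |(-(t ^ 2))| = t ^ 2 := by rw [abs_neg, abs_of_nonneg (sq_nonneg t)]
  rw [h5]
  exact mul_le_mul_of_nonneg_left habs (sq_nonneg t)


end Aux

open Matrix

/-- the curve `c(t) = (φ+tη)·(I + t²⟦η,η⟧)^{-1/2}` satisfies `c(0) = φ`
and `c'(0) = η`. Here, for each `t`, the square root `(I + t²⟦η,η⟧)^{1/2}` is represented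
by the (unique) symmetric positive semidefinite matrix `Sq t` with
`Sq t * Sq t = I + t²⟦η,η⟧`. -/
theorem polar_retraction_local_rigidity {N : ℕ} (hN : 1 ≤ N) {H₀ : Type*}
    [NormedAddCommGroup H₀] [InnerProductSpace ℝ H₀]
    (φ η : Fin N → H₀) (hφ : outerProd φ φ = 1)
    (hη : outerProd η φ + outerProd φ η = 0)
    (Sq : ℝ → Matrix (Fin N) (Fin N) ℝ)
    (hSq : ∀ t : ℝ, (Sq t).PosSemidef ∧ Sq t * Sq t = 1 + (t ^ 2) • outerProd η η) :
    (fun t : ℝ => smulMat (φ + t • η) (Sq t)⁻¹) 0 = φ ∧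
    HasDerivAt (fun t : ℝ => smulMat (φ + t • η) (Sq t)⁻¹) η 0 := by
  classical
  set A := outerProd η η with hAdef
  -- A is positive semidefinite
  have hAq : ∀ x : Fin N → ℝ, x ⬝ᵥ (A *ᵥ x) = ⟪∑ i, x i • η i, ∑ i, x i • η i⟫ := by
    intro x
    simp only [dotProduct, Matrix.mulVec, hAdef, outerProd, Matrix.of_apply,
      Finset.mul_sum, sum_inner, inner_sum, real_inner_smul_left, real_inner_smul_right]
    refine Finset.sum_congr rfl fun i _ => Finset.sum_congr rfl fun j _ => by
      rw [real_inner_comm (η j) (η i)]; ring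
  have hA : A.PosSemidef := by
    refine Matrix.PosSemidef.of_dotProduct_mulVec_nonneg ?_ ?_
    · rw [Matrix.IsHermitian]
      ext i j
      simp only [Matrix.conjTranspose_apply, hAdef, outerProd, Matrix.of_apply, star_trivial]
      exact real_inner_comm _ _
    · intro x
      simp only [star_trivial]
      rw [hAq x]
      exact real_inner_self_nonneg
  -- constant
  set Kc : ℝ := ∑ j, Real.sqrt ((A *ᵥ Pi.single j 1) ⬝ᵥ (A *ᵥ Pi.single j 1)) with hKcdef
  have hKc0 : 0 ≤ Kc := Finset.sum_nonneg fun j _ => Real.sqrt_nonneg _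
  have hCle : ∀ j : Fin N,
      Real.sqrt ((A *ᵥ Pi.single j 1) ⬝ᵥ (A *ᵥ Pi.single j 1)) ≤ Kc := fun j =>
    Finset.single_le_sum
      (f := fun k => Real.sqrt ((A *ᵥ Pi.single k 1) ⬝ᵥ (A *ᵥ Pi.single k 1)))
      (fun k _ => Real.sqrt_nonneg _) (Finset.mem_univ j)
  have hM : ∀ (t : ℝ) (i j : Fin N), |((Sq t)⁻¹ - 1) i j| ≤ t ^ 2 * Kc := by
    intro t i j
    exact (key_entry_bound A (Sq t) t hA (hSq t).1 (hSq t).2 i j).trans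
      (mul_le_mul_of_nonneg_left (hCle j) (sq_nonneg t))
  -- inverse at 0 is the identity
  have hSq0inv : (Sq 0)⁻¹ = 1 := by
    ext i j
    have h := hM 0 i j
    norm_num at h
    exact sub_eq_zero.mp h
  have hone : ∀ (w : Fin N → H₀) (j : Fin N),
      ∑ i, (1 : Matrix (Fin N) (Fin N) ℝ) i j • w i = w j := by
    intro w j
    simp [Matrix.one_apply, ite_smul]
  have hc0 : (fun t : ℝ => smulMat (φ + t • η) (Sq t)⁻¹) 0 = φ := by
    show smulMat (φ + (0:ℝ) • η) (Sq 0)⁻¹ = φ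
    rw [hSq0inv]
    funext j
    rw [smulMat, hone]
    simp
  refine ⟨hc0, ?_⟩
  rw [hasDerivAt_iff_isLittleO]
  rw [show smulMat (φ + (0:ℝ) • η) (Sq 0)⁻¹ = φ from hc0]
  simp only [sub_zero]
  have hlo : (fun t : ℝ => t ^ 2) =o[nhds 0] fun t : ℝ => t := by
    have h1 : (fun t : ℝ => t) =o[nhds 0] (fun _ : ℝ => (1:ℝ)) :=
      Asymptotics.isLittleO_one_iff ℝ |>.2 Filter.tendsto_id
    have h2 := (Asymptotics.isBigO_refl (fun t : ℝ => t) (nhds 0)).mul_isLittleO h1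
    simpa [sq] using h2
  refine Asymptotics.IsBigO.trans_isLittleO ?_ hlo
  rw [Asymptotics.isBigO_iff]
  refine ⟨(N : ℝ) * Kc * (‖φ‖ + ‖η‖), ?_⟩
  have hev : ∀ᶠ t : ℝ in nhds 0, |t| ≤ 1 := by
    filter_upwards [Metric.ball_mem_nhds (0:ℝ) one_pos] with t ht
    rw [Metric.mem_ball, Real.dist_eq, sub_zero] at ht
    exact le_of_lt ht
  filter_upwards [hev] with t ht
  set v : Fin N → H₀ := φ + t • η with hvdef
  have hgt : smulMat v (Sq t)⁻¹ - φ - t • η = smulMat v ((Sq t)⁻¹ - 1) := by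
    funext j
    have hvj : v j = φ j + t • η j := rfl
    simp only [Pi.sub_apply, Pi.smul_apply, smulMat, Matrix.sub_apply, sub_smul,
      Finset.sum_sub_distrib, hone v j]
    rw [sub_sub, ← hvj]
  rw [hgt]
  have hnn : (0:ℝ) ≤ (N : ℝ) * Kc * (‖φ‖ + ‖η‖) * ‖t ^ 2‖ :=
    mul_nonneg (mul_nonneg (mul_nonneg (Nat.cast_nonneg N) hKc0)
      (add_nonneg (norm_nonneg _) (norm_nonneg _))) (norm_nonneg _)
  rw [pi_norm_le_iff_of_nonneg hnn]
  intro j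
  have hvb : ∀ i, ‖v i‖ ≤ ‖φ‖ + ‖η‖ := by
    intro i
    have h1 : ‖φ i‖ ≤ ‖φ‖ := norm_le_pi_norm φ i
    have h2 : ‖t • η i‖ = |t| * ‖η i‖ := by rw [norm_smul, Real.norm_eq_abs]
    have h3 : ‖η i‖ ≤ ‖η‖ := norm_le_pi_norm η i
    calc ‖v i‖ = ‖φ i + t • η i‖ := rfl
      _ ≤ ‖φ i‖ + ‖t • η i‖ := norm_add_le _ _
      _ ≤ ‖φ‖ + ‖η‖ := by
          rw [h2]
          nlinarith [abs_nonneg t, norm_nonneg (η i), norm_nonneg η]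
  calc ‖smulMat v ((Sq t)⁻¹ - 1) j‖
      ≤ ∑ i, ‖((Sq t)⁻¹ - 1) i j • v i‖ := norm_sum_le _ _
    _ ≤ ∑ _i : Fin N, (t ^ 2 * Kc) * (‖φ‖ + ‖η‖) := by
        refine Finset.sum_le_sum fun i _ => ?_
        rw [norm_smul, Real.norm_eq_abs]
        exact mul_le_mul (hM t i j) (hvb i) (norm_nonneg _)
          (mul_nonneg (sq_nonneg t) hKc0)
    _ = (N : ℝ) * ((t ^ 2 * Kc) * (‖φ‖ + ‖η‖)) := by
        rw [Finset.sum_const, Finset.card_univ, Fintype.card_fin, nsmul_eq_mul]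
    _ ≤ (N : ℝ) * Kc * (‖φ‖ + ‖η‖) * ‖t ^ 2‖ := by
        rw [Real.norm_eq_abs, abs_of_nonneg (sq_nonneg t)]
        ring_nf
        exact le_refl _
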